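/- For every connected graph G, the algebraic connectivity λ₂(G) is at most the vertex connectivity κ(G). -/

import Mathlib

open Matrix BigOperators

variable {V : Type*} [Fintype V] [DecidableEq V]

/-- The algebraic connectivity: the second smallest Laplacian eigenvalue, characterized
as the minimum Rayleigh quotient over nonzero vectors orthogonal to the all-ones vector. -/
noncomputable def algConn (G : SimpleGraph V) [DecidableRel G.Adj] : ℝ :=
  sInf {r : ℝ | ∃ x : V → ℝ, x ≠ 0 ∧ (∑ v, x v) = 0 ∧
    r = (x ⬝ᵥ (G.lapMatrix ℝ) *ᵥ x) / (x ⬝ᵥ x)}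

/-- The vertex connectivity: the minimum number of vertices whose removal leaves a
disconnected or trivial graph. -/
noncomputable def vertexConn (G : SimpleGraph V) : ℕ :=
  sInf {k : ℕ | ∃ s : Finset V, s.card = k ∧
    (¬ (G.induce ((↑s : Set V)ᶜ)).Connected ∨ Fintype.card V ≤ k + 1)}

/-- Auxiliary: given a separator `s` and two nonempty parts `A`, `B` covering the
complement of `s` with no edges between them, the Rayleigh quotient of the Fiedler-type
test vector is at most `s.card`. -/
lemma fiedlerAux (G : SimpleGraph V) [DecidableRel G.Adj] (s A B : Finset V)
    (hAne : A.Nonempty) (hBne : B.Nonempty)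
    (hAB : ∀ w, w ∈ A → w ∉ B)
    (hAs : ∀ w, w ∈ A → w ∉ s) (hBs : ∀ w, w ∈ B → w ∉ s)
    (hcov : ∀ w, w ∉ s → w ∈ A ∨ w ∈ B)
    (hadjAB : ∀ w w', w ∈ A → w' ∈ B → ¬ G.Adj w w') :
    ∃ x : V → ℝ, x ≠ 0 ∧ (∑ w, x w) = 0 ∧
      (x ⬝ᵥ (G.lapMatrix ℝ) *ᵥ x) / (x ⬝ᵥ x) ≤ (s.card : ℝ) := by
  classical
  obtain ⟨a, haA⟩ := hAne
  obtain ⟨b, hbB⟩ := hBne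
  set x : V → ℝ := fun w => if w ∈ A then (B.card : ℝ) else if w ∈ B then -(A.card : ℝ) else 0 with hx
  have hxA : ∀ w, w ∈ A → x w = (B.card : ℝ) := fun w hw => by
    simp only [hx]; rw [if_pos hw]
  have hxB : ∀ w, w ∈ B → x w = -(A.card : ℝ) := fun w hw => by
    simp only [hx]; rw [if_neg (fun h => hAB w h hw), if_pos hw]
  have hxs : ∀ w, w ∈ s → x w = 0 := fun w hw => by
    simp only [hx]
    rw [if_neg (fun h => hAs w h hw), if_neg (fun h => hBs w h hw)]
  have hBpos : 0 < B.card := Finset.card_pos.2 ⟨_, hbB⟩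
  have hApos : 0 < A.card := Finset.card_pos.2 ⟨_, haA⟩
  have hx0 : x ≠ 0 := by
    intro h
    have h2 := congrFun h a
    rw [hxA _ haA] at h2
    have : (B.card : ℝ) = 0 := h2
    exact hBpos.ne' (by exact_mod_cast this)
  have hsum : (∑ w, x w) = 0 := by
    have hptw : ∀ w, x w = (B.card : ℝ) * (if w ∈ A then 1 else 0)
        + (-(A.card : ℝ)) * (if w ∈ B then 1 else 0) := by
      intro w
      by_cases h1 : w ∈ A
      · rw [hxA w h1, if_pos h1, if_neg (hAB w h1)]; ring
      · by_cases h2 : w ∈ B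
        · rw [hxB w h2, if_neg h1, if_pos h2]; ring
        · simp only [hx]; rw [if_neg h1, if_neg h2, if_neg h1, if_neg h2]; ring
    rw [Finset.sum_congr rfl (fun w _ => hptw w)]
    rw [Finset.sum_add_distrib, ← Finset.mul_sum, ← Finset.mul_sum]
    rw [Finset.sum_ite_mem, Finset.sum_ite_mem, Finset.univ_inter, Finset.univ_inter]
    simp only [Finset.sum_const, nsmul_eq_mul, mul_one]
    ring
  have hdot : x ⬝ᵥ x = ∑ w, (x w)^2 := by
    simp only [dotProduct, sq]
  have hden : 0 < x ⬝ᵥ x := by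
    rw [hdot]
    apply Finset.sum_pos' (fun i _ => sq_nonneg _)
    refine ⟨a, Finset.mem_univ _, ?_⟩
    rw [hxA _ haA]
    positivity
  have hquad : x ⬝ᵥ (G.lapMatrix ℝ) *ᵥ x
      = (∑ i, ∑ j, if G.Adj i j then (x i - x j)^2 else 0) / 2 := by
    rw [← Matrix.toLinearMap₂'_apply', SimpleGraph.lapMatrix_toLinearMap₂']
  have hterm : ∀ i j, (if G.Adj i j then (x i - x j)^2 else 0)
      ≤ (if i ∈ s then (x j)^2 else 0) + (if j ∈ s then (x i)^2 else 0) := by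
    intro i j
    by_cases hij : G.Adj i j
    · rw [if_pos hij]
      by_cases his : i ∈ s
      · by_cases hjs : j ∈ s
        · rw [if_pos his, if_pos hjs, hxs i his, hxs j hjs]; norm_num
        · rw [if_pos his, if_neg hjs, hxs i his]
          nlinarith [sq_nonneg (x j)]
      · by_cases hjs : j ∈ s
        · rw [if_neg his, if_pos hjs, hxs j hjs]
          nlinarith [sq_nonneg (x i)]
        · rw [if_neg his, if_neg hjs]
          have hxixj : x i = x j := by
            rcases hcov i his with hi | hi <;> rcases hcov j hjs with hj | hj
            · rw [hxA i hi, hxA j hj]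
            · exact absurd hij (hadjAB i j hi hj)
            · exact absurd hij.symm (hadjAB j i hj hi)
            · rw [hxB i hi, hxB j hj]
          rw [hxixj]; norm_num
    · rw [if_neg hij]
      have h1 : (0:ℝ) ≤ if i ∈ s then (x j)^2 else 0 := by positivity
      have h2 : (0:ℝ) ≤ if j ∈ s then (x i)^2 else 0 := by positivity
      linarith
  have hnum : x ⬝ᵥ (G.lapMatrix ℝ) *ᵥ x ≤ (s.card : ℝ) * (x ⬝ᵥ x) := by
    rw [hquad, hdot]
    have hsumle : (∑ i, ∑ j, if G.Adj i j then (x i - x j)^2 else 0)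
        ≤ ∑ i, ∑ j, ((if i ∈ s then (x j)^2 else 0) + (if j ∈ s then (x i)^2 else 0)) :=
      Finset.sum_le_sum fun i _ => Finset.sum_le_sum fun j _ => hterm i j
    have heq : (∑ i, ∑ j, ((if i ∈ s then (x j)^2 else 0) + (if j ∈ s then (x i)^2 else 0)))
        = 2 * ((s.card : ℝ) * ∑ w, (x w)^2) := by
      simp_rw [Finset.sum_add_distrib]
      have e1 : (∑ i, ∑ j, if i ∈ s then (x j)^2 else 0) = (s.card : ℝ) * ∑ w, (x w)^2 := by
        have h3 : ∀ i : V, (∑ j, if i ∈ s then (x j)^2 else 0)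
            = if i ∈ s then (∑ w, (x w)^2) else 0 := by
          intro i; split_ifs <;> simp
        rw [Finset.sum_congr rfl fun i _ => h3 i, Finset.sum_ite_mem, Finset.univ_inter,
          Finset.sum_const, nsmul_eq_mul]
      have e2 : (∑ i : V, ∑ j, if j ∈ s then (x i)^2 else 0) = (s.card : ℝ) * ∑ w, (x w)^2 := by
        rw [Finset.sum_comm]
        have h3 : ∀ j : V, (∑ i, if j ∈ s then (x i)^2 else 0)
            = if j ∈ s then (∑ w, (x w)^2) else 0 := by
          intro j; split_ifs <;> simp
        rw [Finset.sum_congr rfl fun j _ => h3 j, Finset.sum_ite_mem, Finset.univ_inter,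
          Finset.sum_const, nsmul_eq_mul]
      rw [e1, e2]; ring
    rw [heq] at hsumle
    linarith
  refine ⟨x, hx0, hsum, ?_⟩
  rw [div_le_iff₀ hden]
  exact hnum

theorem stmt3 (G : SimpleGraph V) [DecidableRel G.Adj] (hG : G.Connected)
    (hnc : G ≠ ⊤) :
    algConn G ≤ (vertexConn G : ℝ) := by
  classical
  -- a nonadjacent pair
  obtain ⟨u, v, huv, hnadj⟩ : ∃ u v : V, u ≠ v ∧ ¬ G.Adj u v := by
    by_contra h
    push_neg at h
    apply hnc
    ext a b
    simp only [SimpleGraph.top_adj]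
    exact ⟨fun h' => G.ne_of_adj h', fun hne => h a b hne⟩
  have hn2 : 2 ≤ Fintype.card V := Fintype.one_lt_card_iff_nontrivial.2 ⟨u, v, huv⟩
  set K := {k : ℕ | ∃ s : Finset V, s.card = k ∧
    (¬ (G.induce ((↑s : Set V)ᶜ)).Connected ∨ Fintype.card V ≤ k + 1)} with hK
  have hmem : (Fintype.card V - 2) ∈ K := by
    refine ⟨(Finset.univ.erase u).erase v, ?_, Or.inl ?_⟩
    · rw [Finset.card_erase_of_mem (by simp [huv.symm]), Finset.card_erase_of_mem (by simp),
        Finset.card_univ]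
      omega
    · intro hc
      have hu : u ∈ ((↑((Finset.univ.erase u).erase v) : Set V)ᶜ) := by simp
      have hv : v ∈ ((↑((Finset.univ.erase u).erase v) : Set V)ᶜ) := by simp
      obtain ⟨w⟩ := hc.preconnected ⟨u, hu⟩ ⟨v, hv⟩
      cases w with
      | nil => exact huv (by simpa using congrArg Subtype.val rfl)
      | cons hadj p =>
        rename_i q
        have hq : (q : V) = v ∨ (q : V) = u := by
          have := q.2
          simp at this
          tauto
        have hGadj : G.Adj u (q : V) := hadj
        rcases hq with h1 | h1
        · rw [h1] at hGadj; exact hnadj hGadj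
        · rw [h1] at hGadj; exact G.irrefl hGadj
  have hKne : K.Nonempty := ⟨_, hmem⟩
  have hk_le : sInf K ≤ Fintype.card V - 2 := Nat.sInf_le hmem
  obtain ⟨s, hcard, hdisj⟩ : ∃ s : Finset V, s.card = sInf K ∧
      (¬ (G.induce ((↑s : Set V)ᶜ)).Connected ∨ Fintype.card V ≤ sInf K + 1) := by
    have h := Nat.sInf_mem hKne
    rw [hK] at h hk_le ⊢
    exact h
  have hncon : ¬ (G.induce ((↑s : Set V)ᶜ)).Connected := by
    rcases hdisj with h | h
    · exact h
    · omega
  obtain ⟨w0, hw0⟩ : (sᶜ : Finset V).Nonempty := by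
    rw [← Finset.card_pos, Finset.card_compl]
    omega
  have hsne : Nonempty ((↑s : Set V)ᶜ : Set V) := ⟨⟨w0, by simpa using hw0⟩⟩
  have hpre : ¬ (G.induce ((↑s : Set V)ᶜ)).Preconnected := by
    haveI := hsne
    exact fun hp => hncon ⟨hp⟩
  obtain ⟨a, b, hab⟩ : ∃ p q : ((↑s : Set V)ᶜ : Set V),
      ¬ (G.induce ((↑s : Set V)ᶜ)).Reachable p q := by
    by_contra h
    push_neg at h
    exact hpre fun p q => h p q
  -- the two sides of the separator
  set R : V → Prop := fun w => ∃ h : w ∈ ((↑s : Set V)ᶜ),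
    (G.induce ((↑s : Set V)ᶜ)).Reachable a ⟨w, h⟩ with hR
  set A : Finset V := Finset.univ.filter R with hA
  set B : Finset V := Finset.univ.filter (fun w => w ∈ ((↑s : Set V)ᶜ) ∧ ¬ R w) with hB
  have haA : (a : V) ∈ A := by
    rw [hA, Finset.mem_filter]
    exact ⟨Finset.mem_univ _, a.2, SimpleGraph.Reachable.refl _⟩
  have hbB : (b : V) ∈ B := by
    rw [hB, Finset.mem_filter]
    refine ⟨Finset.mem_univ _, b.2, fun hrb => hab ?_⟩
    obtain ⟨h, hr⟩ := hrb
    exact hr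
  have hAs : ∀ w, w ∈ A → w ∉ s := by
    intro w hw
    rw [hA, Finset.mem_filter] at hw
    obtain ⟨-, h, -⟩ := hw
    simpa using h
  have hBs : ∀ w, w ∈ B → w ∉ s := by
    intro w hw
    rw [hB, Finset.mem_filter] at hw
    have := hw.2.1
    simpa using this
  have hABdisj : ∀ w, w ∈ A → w ∉ B := by
    intro w hwA hwB
    rw [hA, Finset.mem_filter] at hwA
    rw [hB, Finset.mem_filter] at hwB
    exact hwB.2.2 hwA.2
  have hcov : ∀ w : V, w ∉ s → (w ∈ A ∨ w ∈ B) := by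
    intro w hw
    by_cases h : R w
    · exact Or.inl (by rw [hA, Finset.mem_filter]; exact ⟨Finset.mem_univ _, h⟩)
    · exact Or.inr (by
        rw [hB, Finset.mem_filter]
        exact ⟨Finset.mem_univ _, by simpa using hw, h⟩)
  have hadjAB : ∀ w w', w ∈ A → w' ∈ B → ¬ G.Adj w w' := by
    intro w w' hwA hwB hadj
    rw [hA, Finset.mem_filter] at hwA
    rw [hB, Finset.mem_filter] at hwB
    obtain ⟨-, hw, hr⟩ := hwA
    refine hwB.2.2 ⟨hwB.2.1, hr.trans (SimpleGraph.Adj.reachable ?_)⟩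
    exact hadj
  obtain ⟨x, hx0, hsum, hle⟩ :=
    fiedlerAux G s A B ⟨_, haA⟩ ⟨_, hbB⟩ hABdisj hAs hBs hcov hadjAB
  -- the Rayleigh set is bounded below by 0
  have hbdd : BddBelow {r : ℝ | ∃ y : V → ℝ, y ≠ 0 ∧ (∑ v, y v) = 0 ∧
      r = (y ⬝ᵥ (G.lapMatrix ℝ) *ᵥ y) / (y ⬝ᵥ y)} := by
    refine ⟨0, fun r hr => ?_⟩
    obtain ⟨y, -, -, rfl⟩ := hr
    apply div_nonneg
    · have h := (SimpleGraph.posSemidef_lapMatrix ℝ G).dotProduct_mulVec_nonneg y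
      simpa using h
    · exact Finset.sum_nonneg fun i _ => mul_self_nonneg _
  have hmem2 : (x ⬝ᵥ (G.lapMatrix ℝ) *ᵥ x) / (x ⬝ᵥ x) ∈ {r : ℝ | ∃ y : V → ℝ, y ≠ 0 ∧
      (∑ v, y v) = 0 ∧ r = (y ⬝ᵥ (G.lapMatrix ℝ) *ᵥ y) / (y ⬝ᵥ y)} :=
    ⟨x, hx0, hsum, rfl⟩
  have h1 : algConn G ≤ (x ⬝ᵥ (G.lapMatrix ℝ) *ᵥ x) / (x ⬝ᵥ x) := csInf_le hbdd hmem2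
  have hvc : vertexConn G = sInf K := rfl
  have hfin : (s.card : ℝ) = (vertexConn G : ℝ) := by rw [hcard, hvc]
  exact (h1.trans hle).trans_eq hfin
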